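/- Let V be a finite dimensional vector space over a field F and let G ≤ GL(V) be generated by three elements x, y, z with xyz = 1. Then dim C_V(x) + dim C_V(y) + dim C_V(z) ≤ dim V + dim C_V(G) + dim(V/[G,V]). -/

import Mathlib

/-- Scott's Lemma, r = 3, restated: if `G ≤ GL(V)` is generated by
`x, y, z` with `xyz = 1`, then
`dim C_V(x) + dim C_V(y) + dim C_V(z) ≤ dim V + dim C_V(G) + dim (V/[G,V])`. -/
theorem scott_lemma_three {F V : Type*} [Field F] [AddCommGroup V] [Module F V]
    [FiniteDimensional F V] (x y z : LinearMap.GeneralLinearGroup F V)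
    (G : Subgroup (LinearMap.GeneralLinearGroup F V))
    (hgen : G = Subgroup.closure {x, y, z})
    (hprod : x * y * z = 1) :
    Module.finrank F (LinearMap.ker ((x : V →ₗ[F] V) - 1)) +
      Module.finrank F (LinearMap.ker ((y : V →ₗ[F] V) - 1)) +
      Module.finrank F (LinearMap.ker ((z : V →ₗ[F] V) - 1)) ≤
    Module.finrank F V +
      Module.finrank F ↥(⨅ u ∈ G, LinearMap.ker ((u : V →ₗ[F] V) - 1)) +
      Module.finrank F
        (V ⧸ Submodule.span F {w : V | ∃ u ∈ G, ∃ v : V, w = (u : V →ₗ[F] V) v - v}) := by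
  classical
  open LinearMap Submodule Module in
  set xL := (x : V →ₗ[F] V) with hxL
  set yL := (y : V →ₗ[F] V) with hyL
  set zL := (z : V →ₗ[F] V) with hzL
  have hxyz : ∀ v : V, xL (yL (zL v)) = v := by
    intro v
    have h1 : ((↑(x * y * z) : V →ₗ[F] V)) v = xL (yL (zL v)) := by
      simp [Units.val_mul, Module.End.mul_apply, hxL, hyL, hzL]
    rw [hprod] at h1
    simpa using h1.symm
  have hzxy : z * (x * y) = 1 := by
    have hz : z = (x * y)⁻¹ := eq_inv_of_mul_eq_one_right hprod
    rw [hz, inv_mul_cancel]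
  set A := LinearMap.ker (xL - 1) with hA
  set B := LinearMap.ker (yL - 1) with hB
  set Kz := LinearMap.ker (zL - 1) with hKz
  set Cg := ⨅ u ∈ G, LinearMap.ker ((u : V →ₗ[F] V) - 1) with hCg
  set W := LinearMap.range (xL - 1) ⊔ LinearMap.range (yL - 1) with hWdef
  have memA : ∀ v : V, v ∈ A ↔ xL v = v := by
    intro v; rw [hA, LinearMap.mem_ker, LinearMap.sub_apply, Module.End.one_apply, sub_eq_zero]
  have memB : ∀ v : V, v ∈ B ↔ yL v = v := by
    intro v; rw [hB, LinearMap.mem_ker, LinearMap.sub_apply, Module.End.one_apply, sub_eq_zero]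
  have memKz : ∀ v : V, v ∈ Kz ↔ zL v = v := by
    intro v; rw [hKz, LinearMap.mem_ker, LinearMap.sub_apply, Module.End.one_apply, sub_eq_zero]
  -- x, y, z belong to G
  have hxG : x ∈ G := hgen ▸ Subgroup.subset_closure (by simp)
  have hyG : y ∈ G := hgen ▸ Subgroup.subset_closure (by simp)
  -- Step 1: the span in the statement equals W
  have hspan : Submodule.span F {w : V | ∃ u ∈ G, ∃ v : V, w = (u : V →ₗ[F] V) v - v} = W := by
    apply le_antisymm
    · rw [Submodule.span_le]
      rintro w ⟨u, huG, v, rfl⟩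
      rw [hgen] at huG
      have hxW : ∀ v : V, (x : V →ₗ[F] V) v - v ∈ W := fun v =>
        Submodule.mem_sup_left ⟨v, by simp [LinearMap.sub_apply, hxL]⟩
      have hyW : ∀ v : V, (y : V →ₗ[F] V) v - v ∈ W := fun v =>
        Submodule.mem_sup_right ⟨v, by simp [LinearMap.sub_apply, hyL]⟩
      have hzW : ∀ v : V, (z : V →ₗ[F] V) v - v ∈ W := by
        intro v
        have h1 : (xL - 1) (yL (zL v)) ∈ W :=
          Submodule.mem_sup_left (LinearMap.mem_range_self _ _)
        have h2 : (yL - 1) (zL v) ∈ W :=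
          Submodule.mem_sup_right (LinearMap.mem_range_self _ _)
        have h3 := W.neg_mem (W.add_mem h1 h2)
        have heq : -((xL - 1) (yL (zL v)) + (yL - 1) (zL v)) = zL v - v := by
          simp only [LinearMap.sub_apply, Module.End.one_apply, hxyz v]
          abel
        rw [heq] at h3
        exact h3
      have key : ∀ v : V, (u : V →ₗ[F] V) v - v ∈ W := by
        induction huG using Subgroup.closure_induction with
        | mem g hg =>
          rcases hg with h | h | h <;> rw [h]
          exacts [hxW, hyW, hzW]
        | one => intro v; simp
        | mul g h hg hh ihg ihh =>
          intro v
          have hgh : ((↑(g * h) : V →ₗ[F] V)) v = (g : V →ₗ[F] V) ((h : V →ₗ[F] V) v) := by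
            simp [Units.val_mul, Module.End.mul_apply]
          have : ((↑(g * h) : V →ₗ[F] V)) v - v =
              ((g : V →ₗ[F] V) ((h : V →ₗ[F] V) v) - (h : V →ₗ[F] V) v) +
              ((h : V →ₗ[F] V) v - v) := by rw [hgh]; abel
          rw [this]
          exact W.add_mem (ihg _) (ihh _)
        | inv g hg ihg =>
          intro v
          have hfix : (g : V →ₗ[F] V) ((↑g⁻¹ : V →ₗ[F] V) v) = v := by
            have h0 : ((g : V →ₗ[F] V) * (↑g⁻¹ : V →ₗ[F] V)) v = v := by
              rw [← Units.val_mul, mul_inv_cancel, Units.val_one, Module.End.one_apply]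
            rwa [Module.End.mul_apply] at h0
          have h3 := W.neg_mem (ihg ((↑g⁻¹ : V →ₗ[F] V) v))
          have heq : -((g : V →ₗ[F] V) ((↑g⁻¹ : V →ₗ[F] V) v) - (↑g⁻¹ : V →ₗ[F] V) v) =
              (↑g⁻¹ : V →ₗ[F] V) v - v := by rw [hfix]; abel
          rwa [heq] at h3
      exact key v
    · refine sup_le ?_ ?_
      · rintro w ⟨v, rfl⟩
        exact Submodule.subset_span ⟨x, hxG, v, by simp [LinearMap.sub_apply, hxL]⟩
      · rintro w ⟨v, rfl⟩
        exact Submodule.subset_span ⟨y, hyG, v, by simp [LinearMap.sub_apply, hyL]⟩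
  -- Step 2: A ⊓ B ≤ Cg
  have hABle : A ⊓ B ≤ Cg := by
    rintro v ⟨hvA, hvB⟩
    have hx : xL v = v := (memA v).mp hvA
    have hy : yL v = v := (memB v).mp hvB
    have hz : zL v = v := by
      have h1 : ((↑(z * (x * y)) : V →ₗ[F] V)) v = zL (xL (yL v)) := by
        simp [Units.val_mul, Module.End.mul_apply, hxL, hyL, hzL]
      rw [hzxy] at h1
      simp only [hy, hx] at h1
      simpa using h1.symm
    rw [hCg]
    refine (Submodule.mem_iInf _).mpr fun u => (Submodule.mem_iInf _).mpr fun huG => ?_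
    rw [hgen] at huG
    have huv : (u : V →ₗ[F] V) v = v := by
      induction huG using Subgroup.closure_induction with
      | mem g hg => rcases hg with rfl | rfl | rfl; exacts [hx, hy, hz]
      | one => simp
      | mul g h hg hh ihg ihh =>
        have : ((↑(g * h) : V →ₗ[F] V)) v = (g : V →ₗ[F] V) ((h : V →ₗ[F] V) v) := by
          simp [Units.val_mul, Module.End.mul_apply]
        rw [this, ihh, ihg]
      | inv g hg ihg =>
        have h2 : (↑g⁻¹ : V →ₗ[F] V) ((g : V →ₗ[F] V) v) = v := by
          have h0 : ((↑g⁻¹ : V →ₗ[F] V) * (g : V →ₗ[F] V)) v = v := by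
            rw [← Units.val_mul, inv_mul_cancel, Units.val_one, Module.End.one_apply]
          rwa [Module.End.mul_apply] at h0
        rwa [ihg] at h2
    rw [LinearMap.mem_ker, LinearMap.sub_apply, Module.End.one_apply, huv, sub_self]
  -- Step 3: the auxiliary map T
  set T : (V × V) →ₗ[F] V :=
    (xL - 1) ∘ₗ LinearMap.fst F V V + (xL ∘ₗ (yL - 1)) ∘ₗ LinearMap.snd F V V with hT
  have hTapp : ∀ p : V × V, T p = (xL - 1) p.1 + xL ((yL - 1) p.2) := fun p => rfl
  have hrangeT : LinearMap.range T = W := by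
    apply le_antisymm
    · rintro w ⟨⟨u, v⟩, rfl⟩
      rw [hTapp]
      refine W.add_mem (Submodule.mem_sup_left (LinearMap.mem_range_self _ _)) ?_
      have : xL ((yL - 1) v) = (xL - 1) ((yL - 1) v) + (yL - 1) v := by
        simp [LinearMap.sub_apply]
      rw [this]
      exact W.add_mem (Submodule.mem_sup_left (LinearMap.mem_range_self _ _))
        (Submodule.mem_sup_right (LinearMap.mem_range_self _ _))
    · refine sup_le ?_ ?_
      · rintro w ⟨v, rfl⟩
        exact ⟨(v, 0), by simp [hTapp]⟩
      · rintro w ⟨v, rfl⟩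
        refine ⟨(-(yL - 1) v, v), ?_⟩
        rw [hTapp]
        simp only [LinearMap.map_neg, LinearMap.sub_apply, Module.End.one_apply]
        abel
  -- diagonal map
  set diag : V →ₗ[F] V × V := LinearMap.prod LinearMap.id LinearMap.id with hdiag
  have hdiaginj : Function.Injective diag := fun a b h => congrArg Prod.fst h
  set D1 : Submodule F (V × V) := A.prod B with hD1
  set D2 : Submodule F (V × V) := Kz.map diag with hD2
  -- D1 ⊔ D2 ≤ ker T
  have hD1ker : D1 ≤ LinearMap.ker T := by
    rintro ⟨a, b⟩ ⟨ha, hb⟩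
    rw [LinearMap.mem_ker, hTapp]
    have ha' : (xL - 1) a = 0 := ha
    have hb' : (yL - 1) b = 0 := hb
    rw [ha', hb']
    simp
  have hD2ker : D2 ≤ LinearMap.ker T := by
    rintro p ⟨w, hw, rfl⟩
    rw [LinearMap.mem_ker, hTapp]
    have hzw : zL w = w := (memKz w).mp hw
    have hxyw : xL (yL w) = w := by
      have := hxyz w; rwa [hzw] at this
    simp only [hdiag, LinearMap.prod_apply, LinearMap.id_apply, Function.prod,
      LinearMap.sub_apply, Module.End.one_apply, map_sub, hxyw]
    abel
  have hsupker : D1 ⊔ D2 ≤ LinearMap.ker T := sup_le hD1ker hD2ker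
  -- D1 ⊓ D2 ≤ diag '' Cg
  have hinfle : D1 ⊓ D2 ≤ Cg.map diag := by
    rintro p ⟨hp1, w, hw, rfl⟩
    obtain ⟨ha, hb⟩ := hp1
    exact ⟨w, hABle ⟨ha, hb⟩, rfl⟩
  -- dimension bookkeeping
  have hrankD1 : Module.finrank F D1 = Module.finrank F A + Module.finrank F B := by
    rw [hD1, LinearMap.prod_eq_sup_map]
    have hinl : Function.Injective (LinearMap.inl F V V) := LinearMap.inl_injective
    have hinr : Function.Injective (LinearMap.inr F V V) := LinearMap.inr_injective
    have hbot : A.map (LinearMap.inl F V V) ⊓ B.map (LinearMap.inr F V V) = ⊥ := by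
      rw [eq_bot_iff]
      rintro p ⟨⟨a, _, rfl⟩, ⟨b, _, hb⟩⟩
      have h1 : a = 0 := by
        have := congrArg Prod.snd hb
        simp only [LinearMap.coe_inr, LinearMap.coe_inl] at hb
        have := congrArg Prod.fst hb
        simpa using this.symm
      simp [h1]
    have := Submodule.finrank_sup_add_finrank_inf_eq
      (A.map (LinearMap.inl F V V)) (B.map (LinearMap.inr F V V))
    rw [hbot] at this
    simp only [finrank_bot, add_zero] at this
    rw [this,
      ← (Submodule.equivMapOfInjective _ hinl A).finrank_eq,
      ← (Submodule.equivMapOfInjective _ hinr B).finrank_eq]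
  have hrankD2 : Module.finrank F D2 = Module.finrank F Kz :=
    ((Submodule.equivMapOfInjective _ hdiaginj Kz).finrank_eq).symm
  have hrankInf : Module.finrank F ↥(D1 ⊓ D2) ≤ Module.finrank F Cg := by
    calc Module.finrank F ↥(D1 ⊓ D2) ≤ Module.finrank F ↥(Cg.map diag) :=
          Submodule.finrank_mono hinfle
      _ = Module.finrank F Cg := ((Submodule.equivMapOfInjective _ hdiaginj Cg).finrank_eq).symm
  have hsupeq : Module.finrank F ↥(D1 ⊔ D2) + Module.finrank F ↥(D1 ⊓ D2) =
      Module.finrank F D1 + Module.finrank F D2 :=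
    Submodule.finrank_sup_add_finrank_inf_eq D1 D2
  have hsuple : Module.finrank F ↥(D1 ⊔ D2) ≤ Module.finrank F (LinearMap.ker T) :=
    Submodule.finrank_mono hsupker
  have hrankT : Module.finrank F (LinearMap.range T) + Module.finrank F (LinearMap.ker T) =
      Module.finrank F (V × V) := LinearMap.finrank_range_add_finrank_ker T
  have hVV : Module.finrank F (V × V) = Module.finrank F V + Module.finrank F V :=
    Module.finrank_prod
  rw [hrangeT] at hrankT
  have hquot : Module.finrank F (V ⧸ W) + Module.finrank F W = Module.finrank F V :=
    Submodule.finrank_quotient_add_finrank W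
  rw [hspan]
  omega
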